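/- Let t ≥ 2 be an integer. The number of (t, t+1)-core partitions with distinct parts whose size is maximal among all (t, t+1)-core partitions with distinct parts equals 2 if t ≡ 1 (mod 3) and equals 1 otherwise. -/

import Mathlib

/-- A partition: a finite weakly decreasing list of positive integers. -/
structure Partn where
  parts : List ℕ
  pos : ∀ p ∈ parts, 0 < p
  sorted : parts.Pairwise (· ≥ ·)

namespace Partn

/-- The size of a partition: the sum of its parts. -/
def size (l : Partn) : ℕ := l.parts.sum

/-- The number of rows `k` (0-indexed) with `λ_k ≥ j` (the length of column `j`). -/
def colLen (l : Partn) (j : ℕ) : ℕ := (l.parts.filter (fun p => j ≤ p)).length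

/-- The hook length of the box in row `i` (0-indexed) and column `j` (1-indexed):
`λ_i − j + #{k : λ_k ≥ j} − i + 1` (with 1-indexed rows). -/
def hook (l : Partn) (i j : ℕ) : ℕ :=
  (l.parts.getD i 0 - j) + (l.colLen j - (i + 1)) + 1

/-- A partition is a `t`-core if none of its hook lengths is divisible by `t`. -/
def IsCore (t : ℕ) (l : Partn) : Prop :=
  ∀ i j : ℕ, i < l.parts.length → 1 ≤ j → j ≤ l.parts.getD i 0 → ¬ (t ∣ l.hook i j)

/-- A partition has distinct parts if its parts are strictly decreasing. -/
def DistinctParts (l : Partn) : Prop := l.parts.Pairwise (· > ·)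

/-- The β-set of a partition: `{λ_i + ℓ − i : 1 ≤ i ≤ ℓ}` (1-indexed). -/
def betaSet (l : Partn) : Finset ℕ :=
  (Finset.range l.parts.length).image
    (fun i => l.parts.getD i 0 + (l.parts.length - 1 - i))

/-- `nFn t i l` is the number of elements of the β-set of `l` congruent to `i` mod `t`. -/
def nFn (t i : ℕ) (l : Partn) : ℕ :=
  (l.betaSet.filter (fun x => x % t = i)).card

end Partn

lemma list_sum_eq_getD (L : List ℕ) :
    L.sum = ∑ i ∈ Finset.range L.length, L.getD i 0 := by
  induction L with
  | nil => simp
  | cons a tl ih => simp [Finset.sum_range_succ', ih, add_comm]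

lemma sorted_gt_getD_add_le (L : List ℕ) (h : L.Pairwise (· > ·)) :
    ∀ i < L.length, L.getD i 0 + i ≤ L.getD 0 0 := by
  induction L with
  | nil => simp
  | cons a tl ih =>
    intro i hi
    cases i with
    | zero => simp
    | succ n =>
      have h1 : tl.Pairwise (· > ·) := h.of_cons
      have hn : n < tl.length := by simpa using hi
      have h2 := ih h1 n hn
      have h3 : tl.getD 0 0 < a := by
        cases tl with
        | nil => simp at hn
        | cons b tl2 =>
          simpa using (List.rel_of_pairwise_cons h (a' := b) (by simp))
      simp only [List.getD_cons_succ, List.getD_cons_zero]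
      omega

lemma sorted_ge_getD_le (L : List ℕ) (h : L.Pairwise (· ≥ ·)) :
    ∀ i j, i ≤ j → j < L.length → L.getD j 0 ≤ L.getD i 0 := by
  intro i j hij hj
  rcases eq_or_lt_of_le hij with rfl | hij
  · exact le_refl _
  · have hi : i < L.length := lt_trans hij hj
    rw [List.getD_eq_getElem _ _ hi, List.getD_eq_getElem _ _ hj]
    exact List.pairwise_iff_getElem.mp h i j hi hj hij

lemma filter_len_ge (L : List ℕ) (h : L.Pairwise (· ≥ ·)) :
    ∀ k, k < L.length → ∀ j, j ≤ L.getD k 0 →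
      k + 1 ≤ (L.filter (fun p => j ≤ p)).length := by
  induction L with
  | nil => simp
  | cons a tl ih =>
    intro k hk j hj
    cases k with
    | zero =>
      simp only [List.getD_cons_zero] at hj
      simp [List.filter_cons, hj]
    | succ n =>
      have hn : n < tl.length := by simpa using hk
      have hj' : j ≤ tl.getD n 0 := by simpa using hj
      have hmem : tl.getD n 0 ∈ tl := by
        rw [List.getD_eq_getElem _ _ hn]; exact List.getElem_mem _
      have ha : j ≤ a := le_trans hj' (List.rel_of_pairwise_cons h hmem)
      have := ih h.of_cons n hn j hj'
      simp only [List.filter_cons, decide_eq_true_eq, if_pos ha, List.length_cons]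
      omega

lemma filter_len_le (L : List ℕ) (h : L.Pairwise (· ≥ ·)) :
    ∀ k, k < L.length → ∀ j, L.getD k 0 < j →
      (L.filter (fun p => j ≤ p)).length ≤ k := by
  induction L with
  | nil => simp
  | cons a tl ih =>
    intro k hk j hj
    cases k with
    | zero =>
      simp only [List.getD_cons_zero] at hj
      have : (a :: tl).filter (fun p => j ≤ p) = [] := by
        rw [List.filter_eq_nil_iff]
        intro x hx
        simp only [decide_eq_true_eq]
        rcases List.mem_cons.mp hx with rfl | hx'
        · omega
        · have := List.rel_of_pairwise_cons h hx'
          omega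
      simp [this]
    | succ n =>
      have hn : n < tl.length := by simpa using hk
      have hj' : tl.getD n 0 < j := by simpa using hj
      have htl := ih h.of_cons n hn j hj'
      by_cases ha : j ≤ a
      · simp only [List.filter_cons, decide_eq_true_eq, if_pos ha, List.length_cons]
        omega
      · simp only [List.filter_cons, decide_eq_true_eq, if_neg ha]
        omega

namespace Partn

lemma colLen_le_length (l : Partn) (j : ℕ) : l.colLen j ≤ l.parts.length :=
  List.length_filter_le _ _

lemma colLen_anti (l : Partn) {j j' : ℕ} (h : j ≤ j') : l.colLen j' ≤ l.colLen j := by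
  unfold colLen
  rw [← List.countP_eq_length_filter, ← List.countP_eq_length_filter]
  apply List.countP_mono_left
  intro x hx
  simp only [decide_eq_true_eq]
  omega

lemma getD_mem (l : Partn) {k : ℕ} (hk : k < l.parts.length) : l.parts.getD k 0 ∈ l.parts := by
  rw [List.getD_eq_getElem _ _ hk]; exact List.getElem_mem _

lemma one_le_getD (l : Partn) {k : ℕ} (hk : k < l.parts.length) : 1 ≤ l.parts.getD k 0 :=
  l.pos _ (l.getD_mem hk)

lemma colLen_ge_of (l : Partn) {k j : ℕ} (hk : k < l.parts.length)
    (hj : j ≤ l.parts.getD k 0) : k + 1 ≤ l.colLen j :=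
  filter_len_ge l.parts l.sorted k hk j hj

lemma colLen_le_of (l : Partn) {k j : ℕ} (hk : k < l.parts.length)
    (hj : l.parts.getD k 0 < j) : l.colLen j ≤ k :=
  filter_len_le l.parts l.sorted k hk j hj

lemma hook_zero_eq (l : Partn) (hne : 0 < l.parts.length) {j : ℕ} (hj1 : 1 ≤ j)
    (hj2 : j ≤ l.parts.getD 0 0) :
    l.hook 0 j = (l.parts.getD 0 0 - j) + l.colLen j := by
  have h1 : 0 + 1 ≤ l.colLen j := l.colLen_ge_of hne hj2
  unfold hook
  omega

lemma row0_hooks (l : Partn) (hne : 0 < l.parts.length) (v : ℕ) (hv1 : 1 ≤ v)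
    (hv2 : v ≤ l.parts.getD 0 0 + (l.parts.length - 1)) :
    (∃ j, 1 ≤ j ∧ j ≤ l.parts.getD 0 0 ∧ l.hook 0 j = v) ∨
    (∃ k, 1 ≤ k ∧ k < l.parts.length ∧
      l.parts.getD 0 0 + (l.parts.length - 1)
        = (l.parts.getD k 0 + (l.parts.length - 1 - k)) + v) := by
  set n := l.parts.length with hn
  set hd := l.parts.getD 0 0 with hhd
  set B0 := hd + (n - 1) with hB0
  set βf : ℕ → ℕ := fun k => l.parts.getD k 0 + (n - 1 - k) with hβf
  have hd1 : 1 ≤ hd := l.one_le_getD hne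
  -- basic bounds on βf
  have hβb : ∀ k, 1 ≤ k → k ≤ n - 1 → 1 ≤ βf k ∧ βf k + k ≤ B0 := by
    intro k hk1 hk2
    have hkn : k < n := by omega
    have h1 : 1 ≤ l.parts.getD k 0 := l.one_le_getD hkn
    have h2 : l.parts.getD k 0 ≤ hd := sorted_ge_getD_le l.parts l.sorted 0 k (by omega) hkn
    simp only [hβf]
    omega
  have hookb : ∀ j, 1 ≤ j → j ≤ hd → 1 ≤ l.hook 0 j ∧ l.hook 0 j ≤ B0 := by
    intro j hj1 hj2
    rw [l.hook_zero_eq hne hj1 hj2]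
    have := l.colLen_le_length j
    have := l.colLen_ge_of hne hj2
    omega
  set S1 := (Finset.Icc 1 hd).image (l.hook 0) with hS1
  set S2 := (Finset.Icc 1 (n - 1)).image (fun k => B0 - βf k) with hS2
  have hmono1 : ∀ j ∈ Finset.Icc 1 hd, ∀ j' ∈ Finset.Icc 1 hd, j < j' →
      l.hook 0 j' < l.hook 0 j := by
    intro j hj j' hj' hlt
    simp only [Finset.mem_Icc] at hj hj'
    rw [l.hook_zero_eq hne hj.1 hj.2, l.hook_zero_eq hne hj'.1 hj'.2]
    have h1 := l.colLen_anti (le_of_lt hlt)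
    have h2 : 0 + 1 ≤ l.colLen j' := l.colLen_ge_of hne hj'.2
    omega
  have hmono2 : ∀ k ∈ Finset.Icc 1 (n-1), ∀ k' ∈ Finset.Icc 1 (n-1), k < k' →
      βf k' < βf k := by
    intro k hk k' hk' hlt
    simp only [Finset.mem_Icc] at hk hk'
    have hk'n : k' < n := by omega
    have h2 : l.parts.getD k' 0 ≤ l.parts.getD k 0 :=
      sorted_ge_getD_le l.parts l.sorted k k' (le_of_lt hlt) hk'n
    simp only [hβf]
    omega
  have hinj1 : Set.InjOn (l.hook 0) (Finset.Icc 1 hd) := by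
    intro a ha b hb hab
    rcases Nat.lt_trichotomy a b with h | h | h
    · exact absurd hab.symm (Nat.ne_of_lt (hmono1 a ha b hb h))
    · exact h
    · exact absurd hab (Nat.ne_of_lt (hmono1 b hb a ha h))
  have hinj2 : Set.InjOn (fun k => B0 - βf k) (Finset.Icc 1 (n-1)) := by
    intro a ha b hb hab
    have ha' := hβb a (Finset.mem_Icc.mp ha).1 (Finset.mem_Icc.mp ha).2
    have hb' := hβb b (Finset.mem_Icc.mp hb).1 (Finset.mem_Icc.mp hb).2
    rcases Nat.lt_trichotomy a b with h | h | h
    · have := hmono2 a ha b hb h; simp only at hab; omega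
    · exact h
    · have := hmono2 b hb a ha h; simp only at hab; omega
  have hdisj : ∀ j, 1 ≤ j → j ≤ hd → ∀ k, 1 ≤ k → k ≤ n - 1 →
      l.hook 0 j ≠ B0 - βf k := by
    intro j hj1 hj2 k hk1 hk2
    have hkn : k < n := by omega
    rw [l.hook_zero_eq hne hj1 hj2]
    have hg1 : 1 ≤ l.parts.getD k 0 := l.one_le_getD hkn
    have hg2 : l.parts.getD k 0 ≤ hd := sorted_ge_getD_le l.parts l.sorted 0 k (by omega) hkn
    by_cases hc : j ≤ l.parts.getD k 0
    · have := l.colLen_ge_of hkn hc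
      simp only [hβf]
      omega
    · have := l.colLen_le_of (j := j) hkn (by omega)
      simp only [hβf]
      omega
  have hcard1 : S1.card = hd := by
    rw [hS1, Finset.card_image_of_injOn hinj1, Nat.card_Icc]; omega
  have hcard2 : S2.card = n - 1 := by
    rw [hS2, Finset.card_image_of_injOn hinj2, Nat.card_Icc]; omega
  have hdisjS : Disjoint S1 S2 := by
    rw [Finset.disjoint_left]
    intro x hx1 hx2
    simp only [hS1, hS2, Finset.mem_image, Finset.mem_Icc] at hx1 hx2
    obtain ⟨j, ⟨hj1, hj2⟩, rfl⟩ := hx1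
    obtain ⟨k, ⟨hk1, hk2⟩, hk3⟩ := hx2
    exact hdisj j hj1 hj2 k hk1 hk2 hk3.symm
  have hsub : S1 ∪ S2 ⊆ Finset.Icc 1 B0 := by
    intro x hx
    rcases Finset.mem_union.mp hx with hx | hx <;>
      simp only [hS1, hS2, Finset.mem_image, Finset.mem_Icc] at hx
    · obtain ⟨j, ⟨hj1, hj2⟩, rfl⟩ := hx
      exact Finset.mem_Icc.mpr (hookb j hj1 hj2)
    · obtain ⟨k, ⟨hk1, hk2⟩, rfl⟩ := hx
      have := hβb k hk1 hk2
      exact Finset.mem_Icc.mpr (by omega)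
  have heq : S1 ∪ S2 = Finset.Icc 1 B0 := by
    apply Finset.eq_of_subset_of_card_le hsub
    rw [Finset.card_union_of_disjoint hdisjS, hcard1, hcard2, Nat.card_Icc]
    omega
  have hv : v ∈ S1 ∪ S2 := by
    rw [heq, Finset.mem_Icc]; exact ⟨hv1, hv2⟩
  rcases Finset.mem_union.mp hv with hx | hx <;>
    simp only [hS1, hS2, Finset.mem_image, Finset.mem_Icc] at hx
  · obtain ⟨j, ⟨hj1, hj2⟩, hj3⟩ := hx
    exact Or.inl ⟨j, hj1, hj2, hj3⟩
  · obtain ⟨k, ⟨hk1, hk2⟩, hk3⟩ := hx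
    have h5 := hβb k hk1 hk2
    simp only [hβf, hB0] at h5 hk3 ⊢
    refine Or.inr ⟨k, hk1, by omega, by omega⟩

lemma isCore_of_bound (s : ℕ) (l : Partn) (h : l.parts.getD 0 0 + l.parts.length ≤ s) :
    l.IsCore s := by
  intro i j hi hj1 hj2 hdvd
  have h1 : l.parts.getD i 0 ≤ l.parts.getD 0 0 :=
    sorted_ge_getD_le l.parts l.sorted 0 i (Nat.zero_le _) hi
  have h2 : l.colLen j ≤ l.parts.length := l.colLen_le_length j
  have hle : l.hook i j ≤ s - 1 := by unfold hook; omega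
  have hpos : 0 < l.hook i j := by unfold hook; omega
  have := Nat.le_of_dvd hpos hdvd
  omega

lemma sorted_gt_getD_gap (L : List ℕ) (h : L.Pairwise (· > ·)) :
    ∀ k k', k ≤ k' → k' < L.length → L.getD k' 0 + (k' - k) ≤ L.getD k 0 := by
  induction L with
  | nil => simp
  | cons a tl ih =>
    intro k k' hkk hk'
    cases k with
    | zero =>
      have := sorted_gt_getD_add_le (a :: tl) h k' hk'
      simpa using this
    | succ k0 =>
      cases k' with
      | zero => omega
      | succ k0' =>
        have := ih h.of_cons k0 k0' (by omega) (by simpa using hk')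
        simp only [List.getD_cons_succ]
        omega

lemma bound_of_core (t : ℕ) (ht : 2 ≤ t) (l : Partn) (hdist : l.DistinctParts)
    (h1 : l.IsCore t) (h2 : l.IsCore (t + 1)) :
    l.parts.getD 0 0 + l.parts.length ≤ t := by
  rcases Nat.eq_zero_or_pos l.parts.length with hn | hn
  · rw [List.length_eq_zero_iff] at hn
    simp [hn]
  by_contra hcon
  push_neg at hcon
  have hB0 : t ≤ l.parts.getD 0 0 + (l.parts.length - 1) := by omega
  have happ1 := l.row0_hooks hn t (by omega) hB0
  rcases happ1 with ⟨j, hj1, hj2, hj3⟩ | ⟨k, hk1, hk2, hk3⟩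
  · exact h1 0 j hn hj1 hj2 (hj3 ▸ dvd_refl t)
  have hgk : 1 ≤ l.parts.getD k 0 := l.one_le_getD hk2
  have hB0' : t + 1 ≤ l.parts.getD 0 0 + (l.parts.length - 1) := by omega
  have happ2 := l.row0_hooks hn (t+1) (by omega) hB0'
  rcases happ2 with ⟨j, hj1, hj2, hj3⟩ | ⟨k', hk1', hk2', hk3'⟩
  · exact h2 0 j hn hj1 hj2 (hj3 ▸ dvd_refl (t+1))
  have hgk' : 1 ≤ l.parts.getD k' 0 := l.one_le_getD hk2'
  rcases Nat.lt_trichotomy k k' with hlt | rfl | hlt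
  · have := sorted_gt_getD_gap l.parts hdist k k' (Nat.le_of_lt hlt) hk2'
    omega
  · omega
  · have := sorted_gt_getD_gap l.parts hdist k' k (Nat.le_of_lt hlt) hk2
    omega

lemma core_iff (t : ℕ) (ht : 2 ≤ t) (l : Partn) (hdist : l.DistinctParts) :
    (l.IsCore t ∧ l.IsCore (t + 1)) ↔ l.parts.getD 0 0 + l.parts.length ≤ t :=
  ⟨fun ⟨h1, h2⟩ => bound_of_core t ht l hdist h1 h2,
   fun h => ⟨isCore_of_bound t l h, isCore_of_bound (t+1) l (by omega)⟩⟩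

end Partn

def gfun (t L : ℕ) : ℕ := ∑ i ∈ Finset.range L, (t - L - i)

lemma list_range_map_sum (n : ℕ) (f : ℕ → ℕ) :
    ((List.range n).map f).sum = ∑ i ∈ Finset.range n, f i := by
  induction n with
  | zero => simp
  | succ m ih => rw [List.range_succ, Finset.sum_range_succ, ← ih]; simp

def stair (t L : ℕ) : List ℕ := (List.range L).map (fun i => t - L - i)

lemma stair_length (t L : ℕ) : (stair t L).length = L := by simp [stair]

lemma stair_getD (t L : ℕ) {i : ℕ} (hi : i < L) : (stair t L).getD i 0 = t - L - i := by
  rw [List.getD_eq_getElem _ _ (by simpa [stair_length] using hi)]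
  simp [stair]

lemma stair_sorted (t L : ℕ) (h : 2 * L ≤ t) : (stair t L).Pairwise (· > ·) := by
  rw [List.pairwise_iff_getElem]
  intro i j hi hj hij
  simp only [stair_length] at hi hj
  simp only [stair, List.getElem_map, List.getElem_range]
  omega

lemma stair_pos (t L : ℕ) (h : 2 * L ≤ t) : ∀ p ∈ stair t L, 0 < p := by
  intro p hp
  simp only [stair, List.mem_map, List.mem_range] at hp
  obtain ⟨i, hi, rfl⟩ := hp
  omega

lemma stair_sum (t L : ℕ) : (stair t L).sum = gfun t L :=
  list_range_map_sum L _

def stairP (t L : ℕ) : Partn :=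
  if h : 2 * L ≤ t then
    ⟨stair t L, stair_pos t L h, (stair_sorted t L h).imp (fun {a b} hab => le_of_lt hab)⟩
  else ⟨[], by simp, by simp⟩

lemma stairP_parts (t L : ℕ) (h : 2 * L ≤ t) : (stairP t L).parts = stair t L := by
  simp [stairP, h]

lemma two_mul_gfun (t L : ℕ) (h : 2 * L ≤ t) :
    2 * gfun t L = 2 * L * (t + 1 - 2 * L) + L * (L - 1) := by
  have h1 : gfun t L = ∑ i ∈ Finset.range L, ((t + 1 - 2 * L) + i) := by
    rw [gfun, ← Finset.sum_range_reflect]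
    apply Finset.sum_congr rfl
    intro i hi
    have := Finset.mem_range.mp hi
    omega
  have h2 : (∑ i ∈ Finset.range L, i) * 2 = L * (L - 1) := Finset.sum_range_id_mul_two L
  rw [h1, Finset.sum_add_distrib, Finset.sum_const, Finset.card_range, smul_eq_mul]
  rw [Nat.mul_add, ← h2]
  ring

lemma key_ineq (d s : ℤ) (h0 : 0 ≤ s) (h2 : s ≤ 2) : 0 ≤ d * (3*d + 2*s - 1) := by
  rcases lt_trichotomy d 0 with h | h | h
  · have : d ≤ -1 := by omega
    nlinarith
  · simp [h]
  · have : 1 ≤ d := by omega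
    nlinarith

lemma key_ineq_strict (d s : ℤ) (h0 : 0 ≤ s) (h2 : s ≤ 2) (hd : d ≠ 0)
    (h3 : ¬(s = 2 ∧ d = -1)) : 0 < d * (3*d + 2*s - 1) := by
  rcases lt_trichotomy d 0 with h | h | h
  · rcases eq_or_lt_of_le (show d ≤ -1 by omega) with rfl | h'
    · have hs : s ≤ 1 := by
        rcases eq_or_lt_of_le h2 with rfl | h'' : _
        · exact absurd ⟨rfl, rfl⟩ h3
        · omega
      nlinarith
    · have : d ≤ -2 := by omega
      nlinarith
  · exact absurd h hd
  · have : 1 ≤ d := by omega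
    nlinarith

lemma gfun_le (t l L : ℕ) (hl1 : 1 ≤ l) (hl2 : 2*l ≤ t) (hL1 : 1 ≤ L) (hL2 : 2*L ≤ t)
    (hs1 : 3*L ≤ t+1) (hs2 : t ≤ 3*L+1) : gfun t l ≤ gfun t L := by
  have e1 := two_mul_gfun t l hl2
  have e2 := two_mul_gfun t L hL2
  have key := key_ineq ((L:ℤ) - (l:ℤ)) ((t:ℤ)+1-3*(L:ℤ)) (by push_cast; omega) (by push_cast; omega)
  have goal2 : 2 * gfun t l ≤ 2 * gfun t L := by
    rw [e1, e2]
    zify [show 2*l ≤ t+1 by omega, show 2*L ≤ t+1 by omega, hl1, hL1]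
    nlinarith [key]
  omega

lemma gfun_lt (t l L : ℕ) (hl1 : 1 ≤ l) (hl2 : 2*l ≤ t) (hL1 : 1 ≤ L) (hL2 : 2*L ≤ t)
    (hs1 : 3*L ≤ t+1) (hs2 : t ≤ 3*L+1) (hne : l ≠ L) (hne2 : ¬(t+1 = 3*L+2 ∧ l = L+1)) :
    gfun t l < gfun t L := by
  have e1 := two_mul_gfun t l hl2
  have e2 := two_mul_gfun t L hL2
  have key := key_ineq_strict ((L:ℤ) - (l:ℤ)) ((t:ℤ)+1-3*(L:ℤ)) (by push_cast; omega)
    (by push_cast; omega) (by push_cast; omega)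
    (by push_cast; intro ⟨a, b⟩; apply hne2; constructor <;> omega)
  have goal2 : 2 * gfun t l < 2 * gfun t L := by
    rw [e1, e2]
    zify [show 2*l ≤ t+1 by omega, show 2*L ≤ t+1 by omega, hl1, hL1]
    nlinarith [key]
  omega

lemma Partn.ext' {a b : Partn} (h : a.parts = b.parts) : a = b := by
  cases a; cases b; simpa using h

lemma distinct_two_mul_len_le (lam : Partn) (t : ℕ) (hdist : lam.DistinctParts)
    (hb : lam.parts.getD 0 0 + lam.parts.length ≤ t) (hne : lam.parts ≠ []) :
    1 ≤ lam.parts.length ∧ 2 * lam.parts.length ≤ t := by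
  have hn : 0 < lam.parts.length := List.length_pos_iff.mpr hne
  have h1 := sorted_gt_getD_add_le lam.parts hdist (lam.parts.length - 1) (by omega)
  have h2 := lam.one_le_getD (show lam.parts.length - 1 < lam.parts.length by omega)
  omega

lemma size_le_gfun (lam : Partn) (t : ℕ) (hdist : lam.DistinctParts)
    (hb : lam.parts.getD 0 0 + lam.parts.length ≤ t) :
    lam.size ≤ gfun t lam.parts.length ∧
      (lam.size = gfun t lam.parts.length → lam.parts = stair t lam.parts.length) := by
  set n := lam.parts.length with hn
  have hpt : ∀ i ∈ Finset.range n, lam.parts.getD i 0 ≤ t - n - i := by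
    intro i hi
    have hi' := Finset.mem_range.mp hi
    have := sorted_gt_getD_add_le lam.parts hdist i hi'
    omega
  have hsz : lam.size = ∑ i ∈ Finset.range n, lam.parts.getD i 0 := list_sum_eq_getD _
  constructor
  · rw [hsz]
    exact Finset.sum_le_sum hpt
  · intro heq
    rw [hsz] at heq
    have hall := (Finset.sum_eq_sum_iff_of_le hpt).mp heq
    apply List.ext_getElem (by rw [stair_length])
    intro i h1 h2
    have hi : i < n := h1
    have := hall i (Finset.mem_range.mpr hi)
    rw [← List.getD_eq_getElem _ 0 h1]
    rw [← List.getD_eq_getElem _ 0 h2]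
    rw [this, stair_getD t n hi]

lemma gfun_pos (t L : ℕ) (hL1 : 1 ≤ L) (hL2 : 2*L ≤ t) : 1 ≤ gfun t L := by
  have h0 : (0:ℕ) ∈ Finset.range L := Finset.mem_range.mpr hL1
  have h2 : t - L - 0 ≤ ∑ i ∈ Finset.range L, (t - L - i) :=
    Finset.single_le_sum (f := fun i => t - L - i) (fun i _ => Nat.zero_le _) h0
  rw [gfun]
  omega

lemma stairP_core (t L : ℕ) (ht : 2 ≤ t) (hL1 : 1 ≤ L) (hL2 : 2*L ≤ t) :
    ((stairP t L).IsCore t ∧ (stairP t L).IsCore (t+1) ∧ (stairP t L).DistinctParts) ∧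
      (stairP t L).size = gfun t L := by
  have hp := stairP_parts t L hL2
  have hdist : (stairP t L).DistinctParts := by
    rw [Partn.DistinctParts, hp]; exact stair_sorted t L hL2
  have hbound : (stairP t L).parts.getD 0 0 + (stairP t L).parts.length ≤ t := by
    rw [hp, stair_length, stair_getD t L hL1]
    omega
  refine ⟨⟨?_, ?_, hdist⟩, ?_⟩
  · exact ((Partn.core_iff t ht _ hdist).mpr hbound).1
  · exact ((Partn.core_iff t ht _ hdist).mpr hbound).2
  · rw [Partn.size, hp, stair_sum]

lemma mem_iff_main (t : ℕ) (ht : 2 ≤ t) (L : ℕ) (hL1 : 1 ≤ L) (hL2 : 2*L ≤ t)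
    (hopt : ∀ l, 1 ≤ l → 2*l ≤ t → gfun t l ≤ gfun t L) (lam : Partn) :
    ((lam.IsCore t ∧ lam.IsCore (t + 1) ∧ lam.DistinctParts) ∧
        ∀ mu : Partn, (mu.IsCore t ∧ mu.IsCore (t + 1) ∧ mu.DistinctParts) →
          mu.size ≤ lam.size) ↔
      (∃ l, 1 ≤ l ∧ 2*l ≤ t ∧ gfun t l = gfun t L ∧ lam = stairP t l) := by
  obtain ⟨hPL, hsL⟩ := stairP_core t L ht hL1 hL2
  constructor
  · rintro ⟨⟨hc1, hc2, hdist⟩, hmax⟩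
    have hb := (Partn.core_iff t ht lam hdist).mp ⟨hc1, hc2⟩
    have hge : gfun t L ≤ lam.size := hsL ▸ hmax (stairP t L) hPL
    have hne : lam.parts ≠ [] := by
      intro hnil
      have : lam.size = 0 := by rw [Partn.size, hnil]; rfl
      have := gfun_pos t L hL1 hL2
      omega
    obtain ⟨h1, h2⟩ := distinct_two_mul_len_le lam t hdist hb hne
    obtain ⟨hle, heqc⟩ := size_le_gfun lam t hdist hb
    have hle2 := hopt lam.parts.length h1 h2
    have heq1 : gfun t lam.parts.length = gfun t L := by omega
    have heq2 : lam.size = gfun t lam.parts.length := by omega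
    refine ⟨lam.parts.length, h1, h2, heq1, ?_⟩
    exact Partn.ext' (by rw [stairP_parts t _ h2]; exact heqc heq2)
  · rintro ⟨l, hl1, hl2, hgl, rfl⟩
    obtain ⟨hPl, hsl⟩ := stairP_core t l ht hl1 hl2
    refine ⟨hPl, ?_⟩
    rintro mu ⟨hc1, hc2, hdist⟩
    have hb := (Partn.core_iff t ht mu hdist).mp ⟨hc1, hc2⟩
    rcases eq_or_ne mu.parts [] with hnil | hne
    · rw [Partn.size, hnil]
      simp
    · obtain ⟨h1, h2⟩ := distinct_two_mul_len_le mu t hdist hb hne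
      obtain ⟨hle, -⟩ := size_le_gfun mu t hdist hb
      have := hopt mu.parts.length h1 h2
      omega

lemma gfun_eq_succ (t q : ℕ) (h1 : 1 ≤ q) (h2 : t = 3*q+1) : gfun t (q+1) = gfun t q := by
  have e1 := two_mul_gfun t q (by omega)
  have e2 := two_mul_gfun t (q+1) (by omega)
  have h3 : t+1-2*q = q+2 := by omega
  have h4 : t+1-2*(q+1) = q := by omega
  have key : 2 * gfun t (q+1) = 2 * gfun t q := by
    rw [e1, e2, h3, h4]
    obtain ⟨q', rfl⟩ : ∃ q', q = q'+1 := ⟨q-1, by omega⟩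
    simp [Nat.add_sub_cancel]
    ring
  omega

lemma stairP_len_ne (t a b : ℕ) (ha : 2*a ≤ t) (hb : 2*b ≤ t) (hab : a ≠ b) :
    stairP t a ≠ stairP t b := by
  intro hcontra
  have := congrArg (fun p => p.parts.length) hcontra
  simp only [stairP_parts t a ha, stairP_parts t b hb, stair_length] at this
  exact hab this

/-- The number of `(t, t+1)`-core partitions with distinct parts of maximal size. -/
theorem num_largest_t_t_add_one (t : ℕ) (ht : 2 ≤ t) :
    {lam : Partn | (lam.IsCore t ∧ lam.IsCore (t + 1) ∧ lam.DistinctParts) ∧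
        ∀ mu : Partn, (mu.IsCore t ∧ mu.IsCore (t + 1) ∧ mu.DistinctParts) →
          mu.size ≤ lam.size}.ncard
      = if t % 3 = 1 then 2 else 1 := by
  by_cases hr : t % 3 = 1
  · -- two maximizers
    have hq1 : 1 ≤ t/3 := by omega
    have hL2 : 2*(t/3) ≤ t := by omega
    have hs1 : 3*(t/3) ≤ t+1 := by omega
    have hs2 : t ≤ 3*(t/3)+1 := by omega
    have hgeq : gfun t (t/3+1) = gfun t (t/3) := gfun_eq_succ t (t/3) hq1 (by omega)
    have hopt : ∀ l, 1 ≤ l → 2*l ≤ t → gfun t l ≤ gfun t (t/3) :=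
      fun l h1 h2 => gfun_le t l (t/3) h1 h2 hq1 hL2 hs1 hs2
    have hset : {lam : Partn | (lam.IsCore t ∧ lam.IsCore (t + 1) ∧ lam.DistinctParts) ∧
        ∀ mu : Partn, (mu.IsCore t ∧ mu.IsCore (t + 1) ∧ mu.DistinctParts) →
          mu.size ≤ lam.size} = {stairP t (t/3), stairP t (t/3+1)} := by
      ext lam
      rw [Set.mem_setOf_eq, mem_iff_main t ht (t/3) hq1 hL2 hopt lam]
      simp only [Set.mem_insert_iff, Set.mem_singleton_iff]
      constructor
      · rintro ⟨l, hl1, hl2, hgl, rfl⟩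
        by_cases hlq : l = t/3
        · subst hlq; left; rfl
        · have hl' : l = t/3 + 1 := by
            by_contra hlq1
            have := gfun_lt t l (t/3) hl1 hl2 hq1 hL2 hs1 hs2 hlq
              (fun h => hlq1 h.2)
            omega
          subst hl'; right; rfl
      · rintro (rfl | rfl)
        · exact ⟨t/3, hq1, hL2, rfl, rfl⟩
        · exact ⟨t/3+1, by omega, by omega, hgeq, rfl⟩
    rw [hset, if_pos hr]
    exact Set.ncard_pair (stairP_len_ne t (t/3) (t/3+1) hL2 (by omega) (by omega))
  · -- unique maximizer
    obtain ⟨L, hL1, hL2, hs1, hs2, hexc⟩ :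
        ∃ L, 1 ≤ L ∧ 2*L ≤ t ∧ 3*L ≤ t+1 ∧ t ≤ 3*L+1 ∧ t+1 ≠ 3*L+2 := by
      rcases (show t % 3 = 0 ∨ t % 3 = 2 by omega) with h | h
      · exact ⟨t/3, by omega, by omega, by omega, by omega, by omega⟩
      · exact ⟨t/3+1, by omega, by omega, by omega, by omega, by omega⟩
    have hopt : ∀ l, 1 ≤ l → 2*l ≤ t → gfun t l ≤ gfun t L :=
      fun l h1 h2 => gfun_le t l L h1 h2 hL1 hL2 hs1 hs2
    have hset : {lam : Partn | (lam.IsCore t ∧ lam.IsCore (t + 1) ∧ lam.DistinctParts) ∧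
        ∀ mu : Partn, (mu.IsCore t ∧ mu.IsCore (t + 1) ∧ mu.DistinctParts) →
          mu.size ≤ lam.size} = {stairP t L} := by
      ext lam
      rw [Set.mem_setOf_eq, mem_iff_main t ht L hL1 hL2 hopt lam]
      simp only [Set.mem_singleton_iff]
      constructor
      · rintro ⟨l, hl1, hl2, hgl, rfl⟩
        have hl' : l = L := by
          by_contra hlq
          have := gfun_lt t l L hl1 hl2 hL1 hL2 hs1 hs2 hlq (fun h => hexc h.1)
          omega
        subst hl'; rfl
      · rintro rfl
        exact ⟨L, hL1, hL2, rfl, rfl⟩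
    rw [hset, if_neg hr]
    exact Set.ncard_singleton _
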